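/- For w ∈ Sₙ, the graph Γ_w is a forest (contains no cycle as an undirected graph) if and only if w avoids the patterns 4231 and 45̄312; explicitly, if and only if both of the following hold: (a) there are no indices i < j < k < l with w(l) < w(j) < w(k) < w(i), and (b) for all indices i < j < k < l with w(k) < w(l) < w(i) < w(j) there exists an index m with j < m < k and w(l) < w(m) < w(i). -/

import Mathlib

namespace SchubertToric

open Equiv

/-- The number of inversions (= the length `ℓ`) of a permutation. -/
def invCount {n : ℕ} (w : Equiv.Perm (Fin n)) : ℕ :=
  ((Finset.univ : Finset (Fin n × Fin n)).filter fun p => p.1 < p.2 ∧ w p.2 < w p.1).card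

/-- `initSeg w d` is the set `{w(1), …, w(d)}` (0-indexed: images of the first `d` indices). -/
def initSeg {n : ℕ} (w : Equiv.Perm (Fin n)) (d : ℕ) : Finset (Fin n) :=
  (Finset.univ.filter fun i : Fin n => (i : ℕ) < d).image w

/-- `domLE S T`: the increasing rearrangement of `S` is componentwise ≤ that of `T`. -/
def domLE {n : ℕ} (S T : Finset (Fin n)) : Prop :=
  List.Forall₂ (· ≤ ·) (S.sort (· ≤ ·)) (T.sort (· ≤ ·))

/-- Bruhat order on `
Sₙ`, via the tableau criterion. -/
def bruhatLE {n : ℕ} (v w : Equiv.Perm (Fin n)) : Prop :=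
  ∀ d : ℕ, domLE (initSeg v d) (initSeg w d)

/-- `GreedyRel w v vp` says that `vp = v'`, the result of the greedy operation associated
to `w`: there is a sequence of indices `idx 0, idx 1, …`, each chosen as the *least* index
not previously chosen such that the increasing rearrangement of the previously chosen values
together with the new value is componentwise at most `{w(1),…,w(d)}`, and `vp d = v (idx d)`. -/
def GreedyRel {n : ℕ} (w v vp : Equiv.Perm (Fin n)) : Prop :=
  ∃ idx : Fin n → Fin n,
    (∀ d : Fin n, vp d = v (idx d)) ∧
    ∀ d : Fin n,
      IsLeast {i : Fin n |
        (∀ e : Fin n, e < d → idx e ≠ i) ∧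
        domLE (insert (v i)
            ((Finset.univ.filter fun e : Fin n => e < d).image fun e => v (idx e)))
          (initSeg w ((d : ℕ) + 1))}
        (idx d)

/-- Right weak order: `rightWeakLE u v` iff `v = u·s_{i₁}⋯s_{i_k}` with
`ℓ(u·s_{i₁}⋯s_{i_j}) = ℓ(u) + j` for all `0 ≤ j ≤ k`. -/
def rightWeakLE {n : ℕ} (u v : Equiv.Perm (Fin n)) : Prop :=
  ∃ L : List (Equiv.Perm (Fin n)),
    (∀ s ∈ L, ∃ (i : Fin n) (h : (i : ℕ) + 1 < n), s = Equiv.swap i ⟨(i : ℕ) + 1, h⟩) ∧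
    v = u * L.prod ∧
    ∀ k ≤ L.length, invCount (u * (L.take k).prod) = invCount u + k

/-- `Ref(w) = {(w(i),w(j)) : i < j, ℓ(w) − ℓ(t_{w(i),w(j)}·w) = 1}`. -/
def RefSet {n : ℕ} (w : Equiv.Perm (Fin n)) : Set (Fin n × Fin n) :=
  {p | ∃ i j : Fin n, i < j ∧ p = (w i, w j) ∧
    invCount (Equiv.swap (w i) (w j) * w) + 1 = invCount w}

/-- The (undirected) graph `Γ_w` on `Fin n` whose edges are the pairs in `Ref(w)`. -/
def refGraph {n : ℕ} (w : Equiv.Perm (Fin n)) : SimpleGraph (Fin n) :=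
  SimpleGraph.fromRel fun a b => (a, b) ∈ RefSet w

/-- The vertices of `Γ_w`: the integers occurring in pairs of `Ref(w)`. -/
def refVerts {n : ℕ} (w : Equiv.Perm (Fin n)) : Set (Fin n) :=
  {a | ∃ b, (a, b) ∈ RefSet w ∨ (b, a) ∈ RefSet w}

/-- The cone `C(v) = {x ∈ ℝⁿ : x_{v(1)} ≤ x_{v(2)} ≤ ⋯ ≤ x_{v(n)}}`. -/
def coneC {n : ℕ} (v : Equiv.Perm (Fin n)) : Set (Fin n → ℝ) :=
  {x | ∀ i j : Fin n, i ≤ j → x (v i) ≤ x (v j)}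

/-- `Ẽ_w(u) = {(u(i),u(j)) : i < j, t_{u(i),u(j)}·u ≤ w, |ℓ(u) − ℓ(t_{u(i),u(j)}·u)| = 1}`. -/
def Etil {n : ℕ} (w u : Equiv.Perm (Fin n)) : Set (Fin n × Fin n) :=
  {p | ∃ i j : Fin n, i < j ∧ p = (u i, u j) ∧
    bruhatLE (Equiv.swap (u i) (u j) * u) w ∧
    (invCount (Equiv.swap (u i) (u j) * u) + 1 = invCount u ∨
      invCount u + 1 = invCount (Equiv.swap (u i) (u j) * u))}

/-- An element `p = (a,b)` of `Ẽ_w(u)` is decomposable if it is a sum (under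
`(a,b)+(b,c) = (a,c)`) of two or more other elements of `Ẽ_w(u)`. -/
def Decomposable {n : ℕ} (w u : Equiv.Perm (Fin n)) (p : Fin n × Fin n) : Prop :=
  ∃ (m : ℕ) (c : ℕ → Fin n), 2 ≤ m ∧ c 0 = p.1 ∧ c m = p.2 ∧
    ∀ i < m, (c i, c (i + 1)) ∈ Etil w u ∧ (c i, c (i + 1)) ≠ p

/-- `E_w(u)`: the indecomposable elements of `Ẽ_w(u)`. -/
def Ew {n : ℕ} (w u : Equiv.Perm (Fin n)) : Set (Fin n × Fin n) :=
  {p | p ∈ Etil w u ∧ ¬ Decomposable w u p}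

/-- The longest element `w₀ = n(n−1)⋯21` of `Sₙ`. -/
def w0 {n : ℕ} : Equiv.Perm (Fin n) :=
  Function.Involutive.toPerm Fin.rev Fin.rev_rev

section Aux

open Finset

variable {n : ℕ}

private def TT (n : ℕ) : Finset (Fin n × Fin n) := Finset.univ.filter fun p => p.1 < p.2

private lemma invCount_eq_sum (w : Equiv.Perm (Fin n)) :
    (invCount w : ℤ) = ∑ x ∈ TT n, (if w x.2 < w x.1 then (1 : ℤ) else 0) := by
  rw [Finset.sum_boole, TT, Finset.filter_filter]
  norm_cast

private def tau (σ : Equiv.Perm (Fin n)) (x : Fin n × Fin n) : Fin n × Fin n :=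
  if σ x.1 < σ x.2 then (σ x.1, σ x.2) else (σ x.2, σ x.1)

private lemma tau_mem (σ : Equiv.Perm (Fin n)) {x : Fin n × Fin n} (hx : x ∈ TT n) :
    tau σ x ∈ TT n := by
  simp only [TT, Finset.mem_filter, Finset.mem_univ, true_and] at hx ⊢
  rcases lt_trichotomy (σ x.1) (σ x.2) with h | h | h
  · rw [tau, if_pos h]; exact h
  · exact absurd (σ.injective h) hx.ne
  · rw [tau, if_neg (not_lt.mpr h.le)]; exact h

private lemma tau_tau (σ : Equiv.Perm (Fin n)) (hσ : σ * σ = 1) {x : Fin n × Fin n}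
    (hx : x ∈ TT n) : tau σ (tau σ x) = x := by
  simp only [TT, Finset.mem_filter, Finset.mem_univ, true_and] at hx
  have hss : ∀ a, σ (σ a) = a := fun a => by
    have := congrArg (fun f => f a) hσ; simpa [Equiv.Perm.mul_apply] using this
  by_cases h : σ x.1 < σ x.2
  · have h1 : tau σ x = (σ x.1, σ x.2) := if_pos h
    rw [h1, tau]
    simp only [hss]
    rw [if_pos hx]
  · have h1 : tau σ x = (σ x.2, σ x.1) := if_neg h
    rw [h1, tau]
    simp only [hss]
    rw [if_neg (not_lt.mpr hx.le)]

private lemma invCount_mul_swap (w : Equiv.Perm (Fin n)) {i j : Fin n} (hij : i < j)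
    (hd : w j < w i) :
    invCount (w * Equiv.swap i j) + 1 +
      2 * ((Finset.univ.filter fun k => i < k ∧ k < j ∧ w j < w k ∧ w k < w i).card) =
      invCount w := by
  classical
  set σ : Equiv.Perm (Fin n) := Equiv.swap i j with hσdef
  set u : Equiv.Perm (Fin n) := w * σ with hu
  have hσσ : σ * σ = 1 := Equiv.swap_mul_self i j
  have hss : ∀ a, σ (σ a) = a := fun a => by
    have := congrArg (fun f => f a) hσσ; simpa [Equiv.Perm.mul_apply] using this
  have huσ : ∀ p, u (σ p) = w p := by
    intro p; rw [hu]; simp only [Equiv.Perm.mul_apply]; rw [hss]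
  have hσi : σ i = j := Equiv.swap_apply_left i j
  have hσj : σ j = i := Equiv.swap_apply_right i j
  have hσo : ∀ a, a ≠ i → a ≠ j → σ a = a := fun a h1 h2 =>
    Equiv.swap_apply_of_ne_of_ne h1 h2
  have hwinj : ∀ {a b : Fin n}, a ≠ b → w a ≠ w b := fun h hc => h (w.injective hc)
  -- the reindexed sum
  have hre : ∑ x ∈ TT n, (if u (tau σ x).2 < u (tau σ x).1 then (1:ℤ) else 0)
      = ∑ x ∈ TT n, (if u x.2 < u x.1 then (1:ℤ) else 0) := by
    refine Finset.sum_nbij' (i := tau σ) (j := tau σ) (fun a ha => tau_mem σ ha)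
      (fun a ha => tau_mem σ ha) (fun a ha => tau_tau σ hσσ ha)
      (fun a ha => tau_tau σ hσσ ha) (fun a _ => rfl)
  -- the pointwise difference
  set D : Fin n × Fin n → ℤ := fun x =>
    (if w x.2 < w x.1 then (1:ℤ) else 0) -
      (if u (tau σ x).2 < u (tau σ x).1 then (1:ℤ) else 0) with hD
  have hDunflip : ∀ x : Fin n × Fin n, σ x.1 < σ x.2 → D x = 0 := by
    intro x h
    have h1 : tau σ x = (σ x.1, σ x.2) := if_pos h
    simp only [hD, h1, huσ]
    ring
  have hDflip : ∀ x : Fin n × Fin n, ¬ σ x.1 < σ x.2 → D x =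
      (if w x.2 < w x.1 then (1:ℤ) else 0) - (if w x.1 < w x.2 then (1:ℤ) else 0) := by
    intro x h
    have h1 : tau σ x = (σ x.2, σ x.1) := if_neg h
    simp only [hD, h1, huσ]
  -- flipped pairs
  set K : Finset (Fin n) := Finset.univ.filter fun k => i < k ∧ k < j with hK
  set Tflip : Finset (Fin n × Fin n) :=
    insert (i, j) ((K.image fun k => (i, k)) ∪ (K.image fun k => (k, j))) with hTflip
  have hTsub : Tflip ⊆ TT n := by
    intro x hx
    simp only [hTflip, Finset.mem_insert, Finset.mem_union, Finset.mem_image, hK,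
      Finset.mem_filter, Finset.mem_univ, true_and] at hx
    simp only [TT, Finset.mem_filter, Finset.mem_univ, true_and]
    rcases hx with rfl | ⟨k, hk, rfl⟩ | ⟨k, hk, rfl⟩
    · exact hij
    · exact hk.1
    · exact hk.2
  have hzero : ∀ x ∈ TT n, x ∉ Tflip → D x = 0 := by
    intro x hx hnx
    simp only [TT, Finset.mem_filter, Finset.mem_univ, true_and] at hx
    simp only [hTflip, Finset.mem_insert, Finset.mem_union, Finset.mem_image, hK,
      Finset.mem_filter, Finset.mem_univ, true_and, not_or, not_exists] at hnx
    obtain ⟨hne1, hne2, hne3⟩ := hnx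
    apply hDunflip
    by_cases h1 : x.1 = i
    · by_cases h2 : x.2 = j
      · exact absurd (Prod.ext h1 h2) hne1
      · have hx2i : x.2 ≠ i := (h1 ▸ hx).ne'
        rcases lt_or_gt_of_ne h2 with hlt | hgt
        · exact absurd ⟨⟨h1 ▸ hx, hlt⟩, by rw [← h1]⟩ (hne2 x.2)
        · rw [h1, hσi, hσo x.2 hx2i h2]; exact hgt
    · by_cases h2 : x.2 = j
      · have hx1j : x.1 ≠ j := (h2 ▸ hx).ne
        rcases lt_or_gt_of_ne h1 with hlt | hgt
        · rw [h2, hσj, hσo x.1 h1 hx1j]; exact hlt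
        · exact absurd ⟨⟨hgt, h2 ▸ hx⟩, by rw [← h2]⟩ (hne3 x.1)
      · by_cases h1j : x.1 = j
        · have h2i : x.2 ≠ i := fun hc => absurd (hc ▸ h1j ▸ hx) (not_lt.mpr (le_of_lt hij))
          rw [h1j, hσj, hσo x.2 h2i h2]
          exact lt_trans hij (h1j ▸ hx)
        · by_cases h2i : x.2 = i
          · rw [h2i, hσi, hσo x.1 h1 h1j]
            exact lt_trans (h2i ▸ hx) hij
          · rw [hσo x.1 h1 h1j, hσo x.2 h2i h2]; exact hx
  have hsub : ∑ x ∈ TT n, D x = ∑ x ∈ Tflip, D x :=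
    (Finset.sum_subset hTsub (fun x hx hnx => hzero x hx hnx)).symm
  have hnotmem : (i, j) ∉ (K.image fun k => (i,k)) ∪ (K.image fun k => (k,j)) := by
    simp only [Finset.mem_union, Finset.mem_image, hK, Finset.mem_filter, Finset.mem_univ,
      true_and, not_or, not_exists]
    constructor
    · intro k h
      obtain ⟨⟨-, h2⟩, heq⟩ := h
      have : k = j := by simpa using congrArg Prod.snd heq
      exact absurd (this ▸ h2) (lt_irrefl j)
    · intro k h
      obtain ⟨⟨h1, -⟩, heq⟩ := h
      have : k = i := by simpa using congrArg Prod.fst heq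
      exact absurd (this ▸ h1) (lt_irrefl i)
  have hdisj : Disjoint (K.image fun k => (i,k)) (K.image fun k => (k,j)) := by
    rw [Finset.disjoint_left]
    rintro x hx1 hx2
    simp only [Finset.mem_image, hK, Finset.mem_filter, Finset.mem_univ, true_and] at hx1 hx2
    obtain ⟨a, ha, rfl⟩ := hx1
    obtain ⟨b, hb, heq⟩ := hx2
    have : b = i := by simpa using congrArg Prod.fst heq
    exact absurd (this ▸ hb.1) (lt_irrefl i)
  have hsum1 : ∑ x ∈ Tflip, D x = D (i,j) + (∑ k ∈ K, D (i,k) + ∑ k ∈ K, D (k,j)) := by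
    rw [hTflip, Finset.sum_insert hnotmem, Finset.sum_union hdisj,
      Finset.sum_image (fun a _ b _ h => by simpa using congrArg Prod.snd h),
      Finset.sum_image (fun a _ b _ h => by simpa using congrArg Prod.fst h)]
  have hDij : D (i,j) = 1 := by
    have hf : ¬ σ (i,j).1 < σ (i,j).2 := by
      show ¬ σ i < σ j
      rw [hσi, hσj]; exact not_lt.mpr hij.le
    rw [hDflip _ hf]
    have h1 : w (i,j).2 < w (i,j).1 := hd
    rw [if_pos h1, if_neg (not_lt.mpr h1.le)]
    ring
  have hDik : ∀ k ∈ K, D (i,k) + D (k,j) = if w j < w k ∧ w k < w i then 2 else 0 := by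
    intro k hk
    simp only [hK, Finset.mem_filter, Finset.mem_univ, true_and] at hk
    have hki : k ≠ i := ne_of_gt hk.1
    have hkj : k ≠ j := ne_of_lt hk.2
    have hf1 : ¬ σ (i,k).1 < σ (i,k).2 := by
      show ¬ σ i < σ k
      rw [hσi, hσo k hki hkj]; exact not_lt.mpr hk.2.le
    have hf2 : ¬ σ (k,j).1 < σ (k,j).2 := by
      show ¬ σ k < σ j
      rw [hσj, hσo k hki hkj]; exact not_lt.mpr hk.1.le
    rw [hDflip _ hf1, hDflip _ hf2]
    show (if w k < w i then (1:ℤ) else 0) - (if w i < w k then (1:ℤ) else 0) +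
      ((if w j < w k then (1:ℤ) else 0) - (if w k < w j then (1:ℤ) else 0)) = _
    have hwki : w k ≠ w i := hwinj hki
    have hwkj : w k ≠ w j := hwinj hkj
    rcases lt_or_gt_of_ne hwkj with h|h
    · have h2 : w k < w i := h.trans hd
      rw [if_pos h2, if_neg (not_lt.mpr h2.le), if_neg (not_lt.mpr h.le), if_pos h,
        if_neg (by rintro ⟨h3,-⟩; exact absurd h (not_lt.mpr h3.le))]
      ring
    · rcases lt_or_gt_of_ne hwki with h2|h2
      · rw [if_pos h2, if_neg (not_lt.mpr h2.le), if_pos h, if_neg (not_lt.mpr h.le),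
          if_pos ⟨h, h2⟩]
        ring
      · rw [if_neg (not_lt.mpr h2.le), if_pos h2, if_pos h, if_neg (not_lt.mpr h.le),
          if_neg (by rintro ⟨-,h3⟩; exact absurd h2 (not_lt.mpr h3.le))]
        ring
  have hKf : K.filter (fun k => w j < w k ∧ w k < w i) =
      Finset.univ.filter (fun k => i < k ∧ k < j ∧ w j < w k ∧ w k < w i) := by
    rw [hK, Finset.filter_filter]
    apply Finset.filter_congr
    intro k _
    tauto
  have hsum2 : ∑ k ∈ K, D (i,k) + ∑ k ∈ K, D (k,j) =
      2 * ((Finset.univ.filter fun k => i < k ∧ k < j ∧ w j < w k ∧ w k < w i).card : ℤ) := by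
    rw [← Finset.sum_add_distrib, Finset.sum_congr rfl hDik,
      Finset.sum_congr rfl (g := fun k => 2 * (if w j < w k ∧ w k < w i then (1:ℤ) else 0))
        (fun k _ => by
          by_cases h : w j < w k ∧ w k < w i
          · simp [h]
          · simp [h]),
      ← Finset.mul_sum, Finset.sum_boole, hKf]
  have hD' : ∑ x ∈ TT n, D x = (invCount w : ℤ) - (invCount u : ℤ) := by
    rw [hD, Finset.sum_sub_distrib, hre, ← invCount_eq_sum, ← invCount_eq_sum]
  have hfinal : (invCount w : ℤ) - (invCount u : ℤ) =
      1 + 2 * ((Finset.univ.filter fun k => i < k ∧ k < j ∧ w j < w k ∧ w k < w i).card : ℤ) := by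
    rw [← hD', hsub, hsum1, hDij, hsum2]
  have hg : invCount (w * Equiv.swap i j) = invCount u := by rw [hu, hσdef]
  rw [hg]
  omega

private lemma invCount_mul_swap_asc (w : Equiv.Perm (Fin n)) {i j : Fin n} (hij : i < j)
    (ha : w i < w j) :
    invCount w + 1 +
      2 * ((Finset.univ.filter fun k => i < k ∧ k < j ∧ w i < w k ∧ w k < w j).card) =
      invCount (w * Equiv.swap i j) := by
  have hd : (w * Equiv.swap i j) j < (w * Equiv.swap i j) i := by
    simp only [Equiv.Perm.mul_apply, Equiv.swap_apply_left, Equiv.swap_apply_right]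
    exact ha
  have h1 := invCount_mul_swap (w * Equiv.swap i j) hij hd
  rw [mul_assoc, Equiv.swap_mul_self, mul_one] at h1
  rw [← h1]
  have he : (Finset.univ.filter fun k => i < k ∧ k < j ∧
        (w * Equiv.swap i j) j < (w * Equiv.swap i j) k ∧
        (w * Equiv.swap i j) k < (w * Equiv.swap i j) i) =
      (Finset.univ.filter fun k => i < k ∧ k < j ∧ w i < w k ∧ w k < w j) := by
    apply Finset.filter_congr
    intro k _
    by_cases hk : i < k ∧ k < j
    · have hki : k ≠ i := ne_of_gt hk.1
      have hkj : k ≠ j := ne_of_lt hk.2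
      simp only [Equiv.Perm.mul_apply, Equiv.swap_apply_left, Equiv.swap_apply_right,
        Equiv.swap_apply_of_ne_of_ne hki hkj]
    · tauto
  rw [he]

/-- `Edg w a b` : `a` is NW of `b` and the open rectangle between them is empty. -/
def Edg (w : Equiv.Perm (Fin n)) (a b : Fin n) : Prop :=
  w.symm a < w.symm b ∧ b < a ∧
    ∀ c : Fin n, w.symm a < w.symm c → w.symm c < w.symm b → ¬(b < c ∧ c < a)

private lemma swap_conv (w : Equiv.Perm (Fin n)) (i j : Fin n) :
    Equiv.swap (w i) (w j) * w = w * Equiv.swap i j := by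
  rw [Equiv.swap_apply_apply]
  rw [mul_assoc, inv_mul_cancel, mul_one]

lemma mem_refSet_iff (w : Equiv.Perm (Fin n)) (a b : Fin n) :
    (a, b) ∈ RefSet w ↔ Edg w a b := by
  constructor
  · rintro ⟨i, j, hij, heq, hcnt⟩
    injection heq with ha hb
    subst ha; subst hb
    rw [swap_conv] at hcnt
    have hne : w i ≠ w j := fun hc => absurd (w.injective hc) hij.ne
    rcases lt_or_gt_of_ne hne with hasc | hd
    · have h1 := invCount_mul_swap_asc w hij hasc
      omega
    · have h1 := invCount_mul_swap w hij hd
      have hM : ((Finset.univ.filter fun k => i < k ∧ k < j ∧ w j < w k ∧ w k < w i).card) = 0 := by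
        omega
      rw [Finset.card_eq_zero, Finset.filter_eq_empty_iff] at hM
      refine ⟨by simp [hij], hd, ?_⟩
      intro c hc1 hc2 hc3
      rw [Equiv.symm_apply_apply] at hc1 hc2
      exact hM (Finset.mem_univ (w.symm c))
        ⟨hc1, hc2, by rw [Equiv.apply_symm_apply]; exact hc3.1,
          by rw [Equiv.apply_symm_apply]; exact hc3.2⟩
  · rintro ⟨h1, h2, h3⟩
    refine ⟨w.symm a, w.symm b, h1, by simp, ?_⟩
    have hconv : Equiv.swap a b * w = w * Equiv.swap (w.symm a) (w.symm b) := by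
      rw [← swap_conv w (w.symm a) (w.symm b), Equiv.apply_symm_apply, Equiv.apply_symm_apply]
    rw [Equiv.apply_symm_apply, Equiv.apply_symm_apply, hconv]
    have hd : w (w.symm b) < w (w.symm a) := by
      rw [Equiv.apply_symm_apply, Equiv.apply_symm_apply]; exact h2
    have h4 := invCount_mul_swap w h1 hd
    have hM : ((Finset.univ.filter fun k =>
        w.symm a < k ∧ k < w.symm b ∧ w (w.symm b) < w k ∧ w k < w (w.symm a)).card) = 0 := by
      rw [Finset.card_eq_zero, Finset.filter_eq_empty_iff]
      rintro k - ⟨hk1, hk2, hk3, hk4⟩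
      rw [Equiv.apply_symm_apply] at hk3 hk4
      refine h3 (w k) ?_ ?_ ⟨hk3, hk4⟩ <;> rw [Equiv.symm_apply_apply]
      · exact hk1
      · exact hk2
    omega

lemma adj_iff (w : Equiv.Perm (Fin n)) (a b : Fin n) :
    (refGraph w).Adj a b ↔ Edg w a b ∨ Edg w b a := by
  rw [refGraph, SimpleGraph.fromRel_adj, mem_refSet_iff, mem_refSet_iff]
  constructor
  · rintro ⟨-, h⟩; exact h
  · rintro (h | h)
    · exact ⟨h.2.1.ne', Or.inl h⟩
    · exact ⟨h.2.1.ne, Or.inr h⟩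

open SimpleGraph in
private lemma chain_walk (w : Equiv.Perm (Fin n)) :
    ∀ g : ℕ, ∀ a b : Fin n, ((w.symm b : Fin n) : ℕ) - ((w.symm a : Fin n) : ℕ) ≤ g →
      w.symm a < w.symm b → b < a →
      ∃ c : (refGraph w).Walk a b, ∀ v ∈ c.support,
        v = a ∨ v = b ∨ (w.symm a < w.symm v ∧ w.symm v < w.symm b ∧ b < v ∧ v < a) := by
  intro g
  induction g with
  | zero =>
    intro a b hg hpos _
    rw [Fin.lt_def] at hpos
    omega
  | succ g ih =>
    intro a b hg hpos hval
    by_cases hemp : ∀ c : Fin n, w.symm a < w.symm c → w.symm c < w.symm b → ¬(b < c ∧ c < a)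
    · have hadj : (refGraph w).Adj a b := (adj_iff w a b).mpr (Or.inl ⟨hpos, hval, hemp⟩)
      refine ⟨Walk.cons hadj Walk.nil, ?_⟩
      intro v hv
      simp only [Walk.support_cons, Walk.support_nil, List.mem_cons, List.mem_singleton,
        List.not_mem_nil, or_false] at hv
      tauto
    · push_neg at hemp
      obtain ⟨m, hm1, hm2, hm3, hm4⟩ := hemp
      have hg1 : ((w.symm m : Fin n) : ℕ) - ((w.symm a : Fin n) : ℕ) ≤ g := by
        rw [Fin.lt_def] at hm1 hm2
        omega
      have hg2 : ((w.symm b : Fin n) : ℕ) - ((w.symm m : Fin n) : ℕ) ≤ g := by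
        rw [Fin.lt_def] at hm1 hm2
        omega
      obtain ⟨c1, hc1⟩ := ih a m hg1 hm1 hm4
      obtain ⟨c2, hc2⟩ := ih m b hg2 hm2 hm3
      refine ⟨c1.append c2, ?_⟩
      intro v hv
      rw [Walk.support_append, List.mem_append] at hv
      rcases hv with hv | hv
      · rcases hc1 v hv with rfl | rfl | ⟨h1, h2, h3, h4⟩
        · exact Or.inl rfl
        · exact Or.inr (Or.inr ⟨hm1, hm2, hm3, hm4⟩)
        · exact Or.inr (Or.inr ⟨h1, h2.trans hm2, hm3.trans h3, h4⟩)
      · rcases hc2 v (List.mem_of_mem_tail hv) with rfl | rfl | ⟨h1, h2, h3, h4⟩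
        · exact Or.inr (Or.inr ⟨hm1, hm2, hm3, hm4⟩)
        · exact Or.inr (Or.inl rfl)
        · exact Or.inr (Or.inr ⟨hm1.trans h1, h2, h3, h4.trans hm4⟩)

private lemma lex_lt {N a b c a' b' c' : ℕ} (hb : b < N) (hc : c < N) (hb' : b' < N) (hc' : c' < N)
    (h : a' < a ∨ (a' = a ∧ (b' < b ∨ (b' = b ∧ c' < c)))) :
    a' * N * N + b' * N + c' < a * N * N + b * N + c := by
  rcases h with h | ⟨rfl, h⟩
  · have h2 : b' * N + c' < N * N := by
      have h3 : b' * N + N ≤ N * N := by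
        have h4 := Nat.mul_le_mul_right N (Nat.succ_le_of_lt hb')
        calc b' * N + N = (b' + 1) * N := by ring
          _ ≤ N * N := h4
      linarith
    have h5 : a' * N * N + N * N ≤ a * N * N := by
      have h6 := Nat.mul_le_mul_right (N * N) (Nat.succ_le_of_lt h)
      calc a' * N * N + N * N = (a' + 1) * (N * N) := by ring
        _ ≤ a * (N * N) := h6
        _ = a * N * N := by ring
    linarith [Nat.zero_le (b * N), Nat.zero_le c]
  · rcases h with h | ⟨rfl, h⟩
    · have h6 : b' * N + N ≤ b * N := by
        have h7 := Nat.mul_le_mul_right N (Nat.succ_le_of_lt h)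
        calc b' * N + N = (b' + 1) * N := by ring
          _ ≤ b * N := h7
      linarith [Nat.zero_le c]
    · omega

private def meas (q : ((Fin n × Fin n) × Fin n × Fin n)) : ℕ :=
  ((q.2.1 : ℕ) - (q.1.2 : ℕ)) * n * n + ((q.1.2 : ℕ) - (q.1.1 : ℕ)) * n
    + ((q.2.2 : ℕ) - (q.2.1 : ℕ))

open SimpleGraph in
private lemma patA_not_acyclic (w : Equiv.Perm (Fin n))
    (h : ∃ i j k l : Fin n, i < j ∧ j < k ∧ k < l ∧ w l < w j ∧ w j < w k ∧ w k < w i) :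
    ¬ (refGraph w).IsAcyclic := by
  classical
  obtain ⟨i0, j0, k0, l0, hh⟩ := h
  set P : ((Fin n × Fin n) × Fin n × Fin n) → Prop := fun q =>
    q.1.1 < q.1.2 ∧ q.1.2 < q.2.1 ∧ q.2.1 < q.2.2 ∧
    w q.2.2 < w q.1.2 ∧ w q.1.2 < w q.2.1 ∧ w q.2.1 < w q.1.1 with hP
  obtain ⟨q0, hq0, hmin⟩ := (Finset.univ.filter P).exists_min_image meas
    ⟨((i0, j0), k0, l0), Finset.mem_filter.mpr ⟨Finset.mem_univ _, hh⟩⟩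
  rw [Finset.mem_filter] at hq0
  obtain ⟨-, hij, hjk, hkl, hlj, hjki, hki⟩ := hq0
  set i := q0.1.1 with hi
  set j := q0.1.2 with hj
  set k := q0.2.1 with hk
  set l := q0.2.2 with hl
  have hmin' : ∀ q, P q → meas q0 ≤ meas q := fun q hq =>
    hmin q (Finset.mem_filter.mpr ⟨Finset.mem_univ _, hq⟩)
  have hik : i < k := hij.trans hjk
  have hjl : j < l := hjk.trans hkl
  have hwik : w k < w i := hki
  -- lex facts
  have hlex : ∀ i' j' k' l' : Fin n,
      ((k' : ℕ) - (j' : ℕ) < (k : ℕ) - (j : ℕ) ∨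
        ((k' : ℕ) - (j' : ℕ) = (k : ℕ) - (j : ℕ) ∧
          ((j' : ℕ) - (i' : ℕ) < (j : ℕ) - (i : ℕ) ∨
            ((j' : ℕ) - (i' : ℕ) = (j : ℕ) - (i : ℕ) ∧
              (l' : ℕ) - (k' : ℕ) < (l : ℕ) - (k : ℕ))))) →
      meas ((i', j'), k', l') < meas q0 := by
    intro i' j' k' l' hq
    have b1 : (j' : ℕ) - (i' : ℕ) < n := by have := j'.isLt; omega
    have c1 : (l' : ℕ) - (k' : ℕ) < n := by have := l'.isLt; omega
    have b2 : (j : ℕ) - (i : ℕ) < n := by have := j.isLt; omega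
    have c2 : (l : ℕ) - (k : ℕ) < n := by have := l.isLt; omega
    exact lex_lt b2 c2 b1 c1 hq
  have hRac : ∀ m : Fin n, i < m → m < k → ¬(w k < w m ∧ w m < w i) := by
    rintro m hm1 hm2 ⟨hv1, hv2⟩
    rcases lt_trichotomy m j with hmj | rfl | hmj
    · have hnew : P ((m, j), k, l) := ⟨hmj, hjk, hkl, hlj, hjki, hv1⟩
      refine absurd (hmin' _ hnew) (not_le.mpr (hlex m j k l ?_))
      rw [Fin.lt_def] at hm1 hmj
      exact Or.inr ⟨rfl, Or.inl (by omega)⟩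
    · exact absurd hv1 (not_lt.mpr hjki.le)
    · have hnew : P ((i, j), m, l) := ⟨hij, hmj, hm2.trans hkl, hlj, hjki.trans hv1, hv2⟩
      refine absurd (hmin' _ hnew) (not_le.mpr (hlex i j m l ?_))
      rw [Fin.lt_def] at hmj hm2
      exact Or.inl (by omega)
  have hRbd : ∀ m : Fin n, j < m → m < l → ¬(w l < w m ∧ w m < w j) := by
    rintro m hm1 hm2 ⟨hv1, hv2⟩
    rcases lt_trichotomy m k with hmk | rfl | hmk
    · have hnew : P ((i, m), k, l) := ⟨hij.trans hm1, hmk, hkl, hv1, hv2.trans hjki, hki⟩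
      refine absurd (hmin' _ hnew) (not_le.mpr (hlex i m k l ?_))
      rw [Fin.lt_def] at hm1 hmk
      exact Or.inl (by omega)
    · exact absurd hv2 (not_lt.mpr hjki.le)
    · have hnew : P ((i, j), k, m) := ⟨hij, hjk, hmk, hv2, hjki, hki⟩
      refine absurd (hmin' _ hnew) (not_le.mpr (hlex i j k m ?_))
      rw [Fin.lt_def] at hmk hm2
      exact Or.inr ⟨rfl, Or.inr ⟨rfl, by omega⟩⟩
  -- the two needed edges
  have hEac : Edg w (w i) (w k) := by
    refine ⟨by simpa using hik, hki, ?_⟩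
    intro c h1 h2 hc
    rw [Equiv.symm_apply_apply] at h1 h2
    exact hRac (w.symm c) h1 h2 (by rw [Equiv.apply_symm_apply]; exact hc)
  have hEbd : Edg w (w j) (w l) := by
    refine ⟨by simpa using hjl, hlj, ?_⟩
    intro c h1 h2 hc
    rw [Equiv.symm_apply_apply] at h1 h2
    exact hRbd (w.symm c) h1 h2 (by rw [Equiv.apply_symm_apply]; exact hc)
  have hadjAC : (refGraph w).Adj (w i) (w k) := (adj_iff w _ _).mpr (Or.inl hEac)
  have hadjBD : (refGraph w).Adj (w j) (w l) := (adj_iff w _ _).mpr (Or.inl hEbd)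
  -- the two chains
  obtain ⟨c1, hc1⟩ := chain_walk w n (w i) (w j)
    (by have := (w.symm (w j)).isLt; omega)
    (by simpa using hij) (hjki.trans hki)
  obtain ⟨c2, hc2⟩ := chain_walk w n (w k) (w l)
    (by have := (w.symm (w l)).isLt; omega)
    (by simpa using hkl) (hlj.trans hjki)
  -- conclude
  intro hac
  have hbridge := (SimpleGraph.isAcyclic_iff_forall_adj_isBridge.mp hac) hadjAC
  rw [SimpleGraph.isBridge_iff] at hbridge
  apply hbridge
  rw [SimpleGraph.reachable_delete_edges_iff_exists_walk]
  refine ⟨c1.append (Walk.cons hadjBD c2.reverse), ?_⟩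
  intro hmem
  rw [Walk.edges_append, List.mem_append] at hmem
  have hwinj : ∀ {a b : Fin n}, w a = w b → a = b := fun h => w.injective h
  rcases hmem with hmem | hmem
  · have hsupp := SimpleGraph.Walk.snd_mem_support_of_mem_edges c1 hmem
    rcases hc1 _ hsupp with heq | heq | ⟨h1, h2, h3, h4⟩
    · exact absurd (hwinj heq) hik.ne'
    · exact absurd (hwinj heq) hjk.ne'
    · rw [Equiv.symm_apply_apply, Equiv.symm_apply_apply] at h2
      exact absurd h2 (not_lt.mpr hjk.le)
  · rw [Walk.edges_cons, List.mem_cons] at hmem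
    rcases hmem with hmem | hmem
    · rw [Sym2.eq_iff] at hmem
      rcases hmem with ⟨h1, h2⟩ | ⟨h1, h2⟩
      · exact absurd (hwinj h1) hij.ne
      · exact absurd (hwinj h1) (hik.trans hkl).ne
    · rw [Walk.edges_reverse, List.mem_reverse] at hmem
      have hsupp := SimpleGraph.Walk.fst_mem_support_of_mem_edges c2 hmem
      rcases hc2 _ hsupp with heq | heq | ⟨h1, h2, h3, h4⟩
      · exact absurd (hwinj heq) hik.ne
      · exact absurd (hwinj heq) (hij.trans hjl).ne
      · rw [Equiv.symm_apply_apply, Equiv.symm_apply_apply] at h1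
        exact absurd h1 (not_lt.mpr hik.le)

open SimpleGraph in
private lemma patB_not_acyclic (w : Equiv.Perm (Fin n))
    (h : ∃ i j k l : Fin n, (i < j ∧ j < k ∧ k < l ∧ w k < w l ∧ w l < w i ∧ w i < w j) ∧
      ∀ m : Fin n, j < m → m < k → ¬(w l < w m ∧ w m < w i)) :
    ¬ (refGraph w).IsAcyclic := by
  classical
  obtain ⟨i0, j0, k0, l0, hh⟩ := h
  set P : ((Fin n × Fin n) × Fin n × Fin n) → Prop := fun q =>
    (q.1.1 < q.1.2 ∧ q.1.2 < q.2.1 ∧ q.2.1 < q.2.2 ∧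
      w q.2.1 < w q.2.2 ∧ w q.2.2 < w q.1.1 ∧ w q.1.1 < w q.1.2) ∧
    ∀ m : Fin n, q.1.2 < m → m < q.2.1 → ¬(w q.2.2 < w m ∧ w m < w q.1.1) with hP
  obtain ⟨q0, hq0, hmin⟩ := (Finset.univ.filter P).exists_min_image meas
    ⟨((i0, j0), k0, l0), Finset.mem_filter.mpr ⟨Finset.mem_univ _, hh⟩⟩
  rw [Finset.mem_filter] at hq0
  obtain ⟨-, ⟨hij, hjk, hkl, hkl_v, hli_v, hij_v⟩, hunf⟩ := hq0
  set i := q0.1.1 with hi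
  set j := q0.1.2 with hj
  set k := q0.2.1 with hk
  set l := q0.2.2 with hl
  have hmin' : ∀ q, P q → meas q0 ≤ meas q := fun q hq =>
    hmin q (Finset.mem_filter.mpr ⟨Finset.mem_univ _, hq⟩)
  have hik : i < k := hij.trans hjk
  have hjl : j < l := hjk.trans hkl
  have hil : i < l := hij.trans hjl
  have hki_v : w k < w i := hkl_v.trans hli_v
  have hkj_v : w k < w j := hki_v.trans hij_v
  have hlj_v : w l < w j := hli_v.trans hij_v
  have hwinj : ∀ {a b : Fin n}, w a = w b → a = b := fun h => w.injective h
  have hlex : ∀ i' j' k' l' : Fin n,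
      ((k' : ℕ) - (j' : ℕ) < (k : ℕ) - (j : ℕ) ∨
        ((k' : ℕ) - (j' : ℕ) = (k : ℕ) - (j : ℕ) ∧
          ((j' : ℕ) - (i' : ℕ) < (j : ℕ) - (i : ℕ) ∨
            ((j' : ℕ) - (i' : ℕ) = (j : ℕ) - (i : ℕ) ∧
              (l' : ℕ) - (k' : ℕ) < (l : ℕ) - (k : ℕ))))) →
      meas ((i', j'), k', l') < meas q0 := by
    intro i' j' k' l' hq
    have b1 : (j' : ℕ) - (i' : ℕ) < n := by have := j'.isLt; omega
    have c1 : (l' : ℕ) - (k' : ℕ) < n := by have := l'.isLt; omega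
    have b2 : (j : ℕ) - (i : ℕ) < n := by have := j.isLt; omega
    have c2 : (l : ℕ) - (k : ℕ) < n := by have := l.isLt; omega
    exact lex_lt b2 c2 b1 c1 hq
  -- R1 : rectangle (j,k) x (w k, w j) is empty
  have hR1 : ∀ m : Fin n, j < m → m < k → ¬(w k < w m ∧ w m < w j) := by
    rintro m hm1 hm2 ⟨hv1, hv2⟩
    rcases lt_trichotomy (w m) (w l) with hml | hml | hml
    · have hnew : P ((i, j), m, l) :=
        ⟨⟨hij, hm1, hm2.trans hkl, hml, hli_v, hij_v⟩,
          fun m' hm'1 hm'2 => hunf m' hm'1 (hm'2.trans hm2)⟩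
      refine absurd (hmin' _ hnew) (not_le.mpr (hlex i j m l ?_))
      rw [Fin.lt_def] at hm1 hm2
      exact Or.inl (by omega)
    · exact absurd (hwinj hml) (hm2.trans hkl).ne
    · have hmi : w i < w m := by
        rcases lt_trichotomy (w m) (w i) with hx | hx | hx
        · exact absurd ⟨hml, hx⟩ (hunf m hm1 hm2)
        · exact absurd (hwinj hx) (ne_of_gt (hij.trans hm1))
        · exact hx
      have hnew : P ((i, m), k, l) :=
        ⟨⟨hij.trans hm1, hm2, hkl, hkl_v, hli_v, hmi⟩,
          fun m' hm'1 hm'2 => hunf m' (hm1.trans hm'1) hm'2⟩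
      refine absurd (hmin' _ hnew) (not_le.mpr (hlex i m k l ?_))
      rw [Fin.lt_def] at hm1 hm2
      exact Or.inl (by omega)
  -- R4 : rectangle (i,l) x (w l, w i) is empty
  have hR4 : ∀ m : Fin n, i < m → m < l → ¬(w l < w m ∧ w m < w i) := by
    rintro m hm1 hm2 ⟨hv1, hv2⟩
    rcases lt_trichotomy m j with hmj | rfl | hmj
    · have hnew : P ((m, j), k, l) :=
        ⟨⟨hmj, hjk, hkl, hkl_v, hv1, hv2.trans hij_v⟩,
          fun m' hm'1 hm'2 ⟨hx1, hx2⟩ => hunf m' hm'1 hm'2 ⟨hx1, hx2.trans hv2⟩⟩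
      refine absurd (hmin' _ hnew) (not_le.mpr (hlex m j k l ?_))
      rw [Fin.lt_def] at hm1 hmj
      exact Or.inr ⟨rfl, Or.inl (by omega)⟩
    · exact absurd hv2 (not_lt.mpr hij_v.le)
    · rcases lt_trichotomy m k with hmk | rfl | hmk
      · exact hunf m hmj hmk ⟨hv1, hv2⟩
      · exact absurd hv1 (not_lt.mpr hkl_v.le)
      · have hnew : P ((i, j), k, m) :=
          ⟨⟨hij, hjk, hmk, hkl_v.trans hv1, hv2, hij_v⟩,
            fun m' hm'1 hm'2 ⟨hx1, hx2⟩ => hunf m' hm'1 hm'2 ⟨hv1.trans hx1, hx2⟩⟩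
        refine absurd (hmin' _ hnew) (not_le.mpr (hlex i j k m ?_))
        rw [Fin.lt_def] at hmk hm2
        exact Or.inr ⟨rfl, Or.inr ⟨rfl, by omega⟩⟩
  -- edges
  have hEdk : Edg w (w j) (w k) := by
    refine ⟨by simpa using hjk, hkj_v, ?_⟩
    intro c h1 h2 hc
    rw [Equiv.symm_apply_apply] at h1 h2
    exact hR1 (w.symm c) h1 h2 (by rw [Equiv.apply_symm_apply]; exact hc)
  have hEil : Edg w (w i) (w l) := by
    refine ⟨by simpa using hil, hli_v, ?_⟩
    intro c h1 h2 hc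
    rw [Equiv.symm_apply_apply] at h1 h2
    exact hR4 (w.symm c) h1 h2 (by rw [Equiv.apply_symm_apply]; exact hc)
  have hadjDA : (refGraph w).Adj (w j) (w k) := (adj_iff w _ _).mpr (Or.inl hEdk)
  have hadjCB : (refGraph w).Adj (w i) (w l) := (adj_iff w _ _).mpr (Or.inl hEil)
  -- chains
  obtain ⟨c1, hc1⟩ := chain_walk w n (w i) (w k)
    (by have := (w.symm (w k)).isLt; omega)
    (by simpa using hik) hki_v
  obtain ⟨c2, hc2⟩ := chain_walk w n (w j) (w l)
    (by have := (w.symm (w l)).isLt; omega)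
    (by simpa using hjl) hlj_v
  -- conclude
  intro hac
  have hbridge := (SimpleGraph.isAcyclic_iff_forall_adj_isBridge.mp hac) hadjCB
  rw [SimpleGraph.isBridge_iff] at hbridge
  apply hbridge
  rw [SimpleGraph.reachable_delete_edges_iff_exists_walk]
  refine ⟨c1.append (Walk.cons hadjDA.symm c2), ?_⟩
  intro hmem
  rw [Walk.edges_append, List.mem_append] at hmem
  rcases hmem with hmem | hmem
  · have hsupp := SimpleGraph.Walk.snd_mem_support_of_mem_edges c1 hmem
    rcases hc1 _ hsupp with heq | heq | ⟨h1, h2, h3, h4⟩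
    · exact absurd (hwinj heq) hil.ne'
    · exact absurd (hwinj heq) hkl.ne'
    · rw [Equiv.symm_apply_apply, Equiv.symm_apply_apply] at h2
      exact absurd h2 (not_lt.mpr hkl.le)
  · rw [Walk.edges_cons, List.mem_cons] at hmem
    rcases hmem with hmem | hmem
    · rw [Sym2.eq_iff] at hmem
      rcases hmem with ⟨h1, h2⟩ | ⟨h1, h2⟩
      · exact absurd (hwinj h1) hik.ne
      · exact absurd (hwinj h1) hij.ne
    · have hsupp := SimpleGraph.Walk.fst_mem_support_of_mem_edges c2 hmem
      rcases hc2 _ hsupp with heq | heq | ⟨h1, h2, h3, h4⟩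
      · exact absurd (hwinj heq) hij.ne
      · exact absurd (hwinj heq) hil.ne
      · rw [Equiv.symm_apply_apply, Equiv.symm_apply_apply] at h1
        exact absurd h1 (not_lt.mpr hij.le)

open SimpleGraph in
private lemma path_second {V : Type*} {G : SimpleGraph V} {x y : V} (q : G.Walk x y)
    (hxy : x ≠ y) (hne : s(x, y) ∉ q.edges) :
    ∃ c ∈ q.support, G.Adj x c ∧ c ≠ y := by
  cases q with
  | nil => exact absurd rfl hxy
  | @cons u c y' h p =>
    refine ⟨c, ?_, h, ?_⟩
    · rw [Walk.support_cons]
      exact List.mem_cons_of_mem _ p.start_mem_support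
    · intro hcy
      apply hne
      rw [Walk.edges_cons]
      subst hcy
      exact List.mem_cons_self

open SimpleGraph in
private lemma path_internal {V : Type*} {G : SimpleGraph V} {x y : V} (q : G.Walk x y)
    (hq : q.IsPath) :
    ∀ v ∈ q.support, v ≠ x → v ≠ y →
      ∃ a ∈ q.support, ∃ b ∈ q.support, a ≠ b ∧ G.Adj v a ∧ G.Adj v b := by
  revert hq
  induction q with
  | nil =>
    intro _ v hv h1 _
    rw [Walk.support_nil, List.mem_singleton] at hv
    exact absurd hv h1
  | @cons u c y' h p ih =>
    intro hq v hv hvx hvy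
    rw [Walk.support_cons, List.mem_cons] at hv
    rcases hv with rfl | hv
    · exact absurd rfl hvx
    · by_cases hvc : v = c
      · subst hvc
        cases p with
        | nil => exact absurd rfl hvy
        | @cons c' c2 y'' h2 p2 =>
          have hnd := (Walk.isPath_def _).mp hq
          rw [Walk.support_cons, Walk.support_cons] at hnd
          have hu_notin : u ∉ v :: p2.support := (List.nodup_cons.mp hnd).1
          have hc2_in : c2 ∈ v :: p2.support :=
            List.mem_cons_of_mem _ p2.start_mem_support
          refine ⟨u, ?_, c2, ?_, ?_, h.symm, h2⟩
          · rw [Walk.support_cons]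
            exact List.mem_cons_self
          · rw [Walk.support_cons, Walk.support_cons]
            exact List.mem_cons_of_mem _ hc2_in
          · intro huc2
            exact hu_notin (huc2 ▸ hc2_in)
      · have hp : p.IsPath := hq.of_cons
        obtain ⟨a, ha, b, hb, hab, h1, h2⟩ := ih hp v hv hvc hvy
        exact ⟨a, by rw [Walk.support_cons]; exact List.mem_cons_of_mem _ ha,
          b, by rw [Walk.support_cons]; exact List.mem_cons_of_mem _ hb, hab, h1, h2⟩

open SimpleGraph in
private lemma exists_core {V : Type*} {G : SimpleGraph V} (h : ¬ G.IsAcyclic) :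
    ∃ S : Finset V, S.Nonempty ∧
      ∀ v ∈ S, ∃ a ∈ S, ∃ b ∈ S, a ≠ b ∧ G.Adj v a ∧ G.Adj v b := by
  classical
  rw [isAcyclic_iff_forall_adj_isBridge] at h
  push_neg at h
  obtain ⟨x, y, hadj, hnb⟩ := h
  have hr : (G.deleteEdges {s(x, y)}).Reachable x y := by
    by_contra hc
    exact hnb (isBridge_iff.mpr hc)
  rw [reachable_delete_edges_iff_exists_walk] at hr
  obtain ⟨p0, hp0⟩ := hr
  set q : G.Walk x y := (p0.toPath : G.Walk x y) with hqdef
  have hq : q.IsPath := p0.toPath.2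
  have hqe : s(x, y) ∉ q.edges := fun hc => hp0 (Walk.edges_toPath_subset p0 hc)
  have hxy : x ≠ y := G.ne_of_adj hadj
  refine ⟨q.support.toFinset, ⟨x, by simp⟩, ?_⟩
  intro v hv
  rw [List.mem_toFinset] at hv
  by_cases hvx : v = x
  · subst hvx
    obtain ⟨c, hc, hadj2, hcy⟩ := path_second q hxy hqe
    exact ⟨c, List.mem_toFinset.mpr hc, y,
      List.mem_toFinset.mpr q.end_mem_support, hcy, hadj2, hadj⟩
  · by_cases hvy : v = y
    · subst hvy
      have hqe' : s(v, x) ∉ q.reverse.edges := by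
        rw [Walk.edges_reverse, List.mem_reverse, Sym2.eq_swap]
        exact hqe
      obtain ⟨c, hc, hadj2, hcx⟩ := path_second q.reverse (Ne.symm hxy) hqe'
      rw [Walk.support_reverse, List.mem_reverse] at hc
      exact ⟨c, List.mem_toFinset.mpr hc, x,
        List.mem_toFinset.mpr q.start_mem_support, hcx, hadj2, hadj.symm⟩
    · obtain ⟨a, ha, b, hb, hab, h1, h2⟩ := path_internal q hq v hv hvx hvy
      exact ⟨a, List.mem_toFinset.mpr ha, b, List.mem_toFinset.mpr hb, hab, h1, h2⟩

private lemma src_pos (w : Equiv.Perm (Fin n)) {L n1 n2 : Fin n}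
    (hE1 : Edg w L n1) (hE2 : Edg w L n2) (h12 : n1 < n2) : w.symm n1 < w.symm n2 := by
  rcases lt_trichotomy (w.symm n1) (w.symm n2) with h | h | h
  · exact h
  · exact absurd (w.symm.injective h) h12.ne
  · exact absurd ⟨h12, hE2.2.1⟩ (hE1.2.2 n2 hE2.1 h)

private lemma snk_pos (w : Equiv.Perm (Fin n)) {d s t : Fin n}
    (hEs : Edg w s d) (hEt : Edg w t d) (hst : s < t) : w.symm s < w.symm t := by
  rcases lt_trichotomy (w.symm s) (w.symm t) with h | h | h
  · exact h
  · exact absurd (w.symm.injective h) hst.ne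
  · exact absurd ⟨hEs.2.1, hst⟩ (hEt.2.2 s h hEs.1)

private lemma core_pattern (w : Equiv.Perm (Fin n)) (S : Finset (Fin n)) (hne : S.Nonempty)
    (h2 : ∀ v ∈ S, ∃ a ∈ S, ∃ b ∈ S, a ≠ b ∧ (refGraph w).Adj v a ∧ (refGraph w).Adj v b) :
    (∃ i j k l : Fin n, i < j ∧ j < k ∧ k < l ∧ w l < w j ∧ w j < w k ∧ w k < w i) ∨
    (∃ i j k l : Fin n, (i < j ∧ j < k ∧ k < l ∧ w k < w l ∧ w l < w i ∧ w i < w j) ∧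
      ∀ m : Fin n, j < m → m < k → ¬(w l < w m ∧ w m < w i)) := by
  classical
  obtain ⟨L, hLS, hLmin⟩ := S.exists_min_image (fun v => w.symm v) hne
  obtain ⟨a, haS, b, hbS, hab, hadja, hadjb⟩ := h2 L hLS
  have hEdgL : ∀ x ∈ S, (refGraph w).Adj L x → Edg w L x := by
    intro x hxS hadj
    rcases (adj_iff w L x).mp hadj with h | h
    · exact h
    · exact absurd h.1 (not_lt.mpr (hLmin x hxS))
  obtain ⟨n1, hn1S, n2, hn2S, h12, hE1, hE2⟩ :
      ∃ n1 ∈ S, ∃ n2 ∈ S, n1 < n2 ∧ Edg w L n1 ∧ Edg w L n2 := by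
    rcases lt_or_gt_of_ne hab with h | h
    · exact ⟨a, haS, b, hbS, h, hEdgL a haS hadja, hEdgL b hbS hadjb⟩
    · exact ⟨b, hbS, a, haS, h, hEdgL b hbS hadjb, hEdgL a haS hadja⟩
  have hpos12 : w.symm n1 < w.symm n2 := src_pos w hE1 hE2 h12
  obtain ⟨d, hdS, hdmin⟩ := S.exists_min_image (fun v => v) hne
  obtain ⟨a', ha'S, b', hb'S, hab', hadja', hadjb'⟩ := h2 d hdS
  have hEdgd : ∀ x ∈ S, (refGraph w).Adj d x → Edg w x d := by
    intro x hxS hadj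
    rcases (adj_iff w d x).mp hadj with h | h
    · exact absurd h.2.1 (not_lt.mpr (hdmin x hxS))
    · exact h
  obtain ⟨s, hsS, t, htS, hst, hEs, hEt⟩ :
      ∃ s ∈ S, ∃ t ∈ S, s < t ∧ Edg w s d ∧ Edg w t d := by
    rcases lt_or_gt_of_ne hab' with h | h
    · exact ⟨a', ha'S, b', hb'S, h, hEdgd a' ha'S hadja', hEdgd b' hb'S hadjb'⟩
    · exact ⟨b', hb'S, a', ha'S, h, hEdgd b' hb'S hadjb', hEdgd a' ha'S hadja'⟩
  have hposst : w.symm s < w.symm t := snk_pos w hEs hEt hst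
  have hLpos : ∀ x ∈ S, x ≠ L → w.symm L < w.symm x := fun x hx hxL =>
    lt_of_le_of_ne (hLmin x hx) (fun hc => hxL (w.symm.injective hc).symm)
  have hdlt : ∀ x ∈ S, x ≠ d → d < x := fun x hx hxd =>
    lt_of_le_of_ne (hdmin x hx) (Ne.symm hxd)
  by_cases hdn1 : d = n1
  · -- Case A : the min-value vertex is the near neighbor of L
    subst hdn1
    have mk : ∀ q : Fin n, w.symm L < w.symm q → w.symm q < w.symm d → L < q →
        ((∃ i j k l : Fin n, i < j ∧ j < k ∧ k < l ∧ w l < w j ∧ w j < w k ∧ w k < w i) ∨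
        (∃ i j k l : Fin n, (i < j ∧ j < k ∧ k < l ∧ w k < w l ∧ w l < w i ∧ w i < w j) ∧
          ∀ m : Fin n, j < m → m < k → ¬(w l < w m ∧ w m < w i))) := by
      intro q hq1 hq2 hq3
      refine Or.inr ⟨w.symm L, w.symm q, w.symm d, w.symm n2, ⟨hq1, hq2, hpos12,
        by rw [Equiv.apply_symm_apply, Equiv.apply_symm_apply]; exact h12,
        by rw [Equiv.apply_symm_apply, Equiv.apply_symm_apply]; exact hE2.2.1,
        by rw [Equiv.apply_symm_apply, Equiv.apply_symm_apply]; exact hq3⟩, ?_⟩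
      intro m hm1 hm2 hx
      rw [Equiv.apply_symm_apply, Equiv.apply_symm_apply] at hx
      refine hE1.2.2 (w m) (by rw [Equiv.symm_apply_apply]; exact hq1.trans hm1)
        (by rw [Equiv.symm_apply_apply]; exact hm2) ⟨h12.trans hx.1, hx.2⟩
    by_cases hsL : s = L
    · exact mk t (by rw [← hsL]; exact hposst) hEt.1 (by rw [← hsL]; exact hst)
    · have hspos1 : w.symm L < w.symm s := hLpos s hsS hsL
      have hsval : L < s := by
        rcases lt_trichotomy L s with h | h | h
        · exact h
        · exact absurd h.symm hsL
        · exact absurd ⟨hEs.2.1, h⟩ (hE1.2.2 s hspos1 hEs.1)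
      exact mk s hspos1 hEs.1 hsval
  · -- Case B : d ≠ n1
    have hdn1' : d < n1 := hdlt n1 hn1S (fun hc => hdn1 hc.symm)
    have hdn2' : d < n2 := hdn1'.trans h12
    have htL : t ≠ L := by
      intro hc
      subst hc
      exact absurd hposst (not_lt.mpr (hLmin s hsS))
    rcases lt_trichotomy t L with htLv | htLv | htLv
    · -- 4231 via (L, s, t, d)
      have hsL : s ≠ L := fun hc => absurd (hc ▸ hst) (not_lt.mpr htLv.le)
      refine Or.inl ⟨w.symm L, w.symm s, w.symm t, w.symm d,
        hLpos s hsS hsL, hposst, hEt.1,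
        by rw [Equiv.apply_symm_apply, Equiv.apply_symm_apply]; exact hEs.2.1,
        by rw [Equiv.apply_symm_apply, Equiv.apply_symm_apply]; exact hst,
        by rw [Equiv.apply_symm_apply, Equiv.apply_symm_apply]; exact htLv⟩
    · exact absurd htLv htL
    · rcases lt_trichotomy (w.symm d) (w.symm n2) with hdp | hdp | hdp
      · -- 3412-violation via (L, t, d, n2)
        refine Or.inr ⟨w.symm L, w.symm t, w.symm d, w.symm n2,
          ⟨hLpos t htS htL, hEt.1, hdp,
          by rw [Equiv.apply_symm_apply, Equiv.apply_symm_apply]; exact hdn2',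
          by rw [Equiv.apply_symm_apply, Equiv.apply_symm_apply]; exact hE2.2.1,
          by rw [Equiv.apply_symm_apply, Equiv.apply_symm_apply]; exact htLv⟩, ?_⟩
        intro m hm1 hm2 hx
        rw [Equiv.apply_symm_apply, Equiv.apply_symm_apply] at hx
        refine hEt.2.2 (w m) (by rw [Equiv.symm_apply_apply]; exact hm1)
          (by rw [Equiv.symm_apply_apply]; exact hm2)
          ⟨hdn2'.trans hx.1, hx.2.trans htLv⟩
      · exact absurd (w.symm.injective hdp) hdn2'.ne
      · -- 4231 via (L, n1, n2, d)
        refine Or.inl ⟨w.symm L, w.symm n1, w.symm n2, w.symm d,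
          hE1.1, hpos12, hdp,
          by rw [Equiv.apply_symm_apply, Equiv.apply_symm_apply]; exact hdn1',
          by rw [Equiv.apply_symm_apply, Equiv.apply_symm_apply]; exact h12,
          by rw [Equiv.apply_symm_apply, Equiv.apply_symm_apply]; exact hE2.2.1⟩

end Aux

/-- `Γ_w` is a forest iff `w` avoids the patterns `4231` and `45̄312`:
(a) there are no `i < j < k < l` with `w(l) < w(j) < w(k) < w(i)`, and
(b) for all `i < j < k < l` with `w(k) < w(l) < w(i) < w(j)` there is `m` with
`j < m < k` and `w(l) < w(m) < w(i)`. -/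
theorem refGraph_isAcyclic_iff_pattern_avoiding {n : ℕ} (w : Equiv.Perm (Fin n)) :
    (refGraph w).IsAcyclic ↔
      ((¬ ∃ i j k l : Fin n, i < j ∧ j < k ∧ k < l ∧
          w l < w j ∧ w j < w k ∧ w k < w i) ∧
       (∀ i j k l : Fin n, i < j → j < k → k < l →
          w k < w l → w l < w i → w i < w j →
          ∃ m : Fin n, j < m ∧ m < k ∧ w l < w m ∧ w m < w i)) := by
  constructor
  · intro hac
    refine ⟨fun hA => patA_not_acyclic w hA hac, ?_⟩
    intro i j k l h1 h2 h3 h4 h5 h6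
    by_contra hcon
    exact patB_not_acyclic w
      ⟨i, j, k, l, ⟨h1, h2, h3, h4, h5, h6⟩,
        fun m hm1 hm2 hx => hcon ⟨m, hm1, hm2, hx.1, hx.2⟩⟩ hac
  · rintro ⟨hA, hB⟩
    by_contra hcyc
    obtain ⟨S, hne, h2⟩ := exists_core hcyc
    rcases core_pattern w S hne h2 with h | ⟨i, j, k, l, hocc, hunf⟩
    · exact hA h
    · obtain ⟨m, hm1, hm2, hm3, hm4⟩ := hB i j k l hocc.1 hocc.2.1 hocc.2.2.1
        hocc.2.2.2.1 hocc.2.2.2.2.1 hocc.2.2.2.2.2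
      exact hunf m hm1 hm2 ⟨hm3, hm4⟩
end SchubertToric
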